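/- Let G be a graph, let u and v be adjacent vertices of G that are twins (N[u] = N[v]), and let M be a maximal induced matching of G containing an edge vp with p ≠ u. Then (M \ {vp}) ∪ {up} is also a maximal induced matching of G. -/
import Mathlib


open SimpleGraph

/-- An induced matching: a set of edges of `G` such that the endpoints of distinct
edges are distinct and non-adjacent (i.e. the endpoints induce a 1-regular subgraph). -/
def IsInducedMatching {V : Type*} (G : SimpleGraph V) (M : Set (Sym2 V)) : Prop :=
  M ⊆ G.edgeSet ∧
    ∀ e ∈ M, ∀ f ∈ M, e ≠ f → ∀ a ∈ e, ∀ b ∈ f, a ≠ b ∧ ¬ G.Adj a b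

/-- A maximal induced matching: an induced matching not properly contained in another. -/
def IsMaximalInducedMatching {V : Type*} (G : SimpleGraph V) (M : Set (Sym2 V)) : Prop :=
  IsInducedMatching G M ∧ ∀ M' : Set (Sym2 V), IsInducedMatching G M' → M ⊆ M' → M' = M

/-- The number of maximal induced matchings of `G`. -/
noncomputable def mim {V : Type*} (G : SimpleGraph V) : ℕ :=
  {M : Set (Sym2 V) | IsMaximalInducedMatching G M}.ncard

lemma twin_mem_iff {V : Type*} (G : SimpleGraph V) (u v : V)
    (htwin : insert u (G.neighborSet u) = insert v (G.neighborSet v)) (b : V) :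
    (b = u ∨ G.Adj u b) ↔ (b = v ∨ G.Adj v b) := by
  have := Set.ext_iff.mp htwin b
  simpa [Set.mem_insert_iff, SimpleGraph.mem_neighborSet, G.adj_comm] using this

lemma swap_ind {V : Type*} (G : SimpleGraph V) (u v : V)
    (huv : G.Adj u v)
    (htwin : insert u (G.neighborSet u) = insert v (G.neighborSet v))
    (M : Set (Sym2 V)) (hM : IsInducedMatching G M)
    (p : V) (hp : p ≠ u) (hmem : s(v, p) ∈ M) :
    IsInducedMatching G ((M \ {s(v, p)}) ∪ {s(u, p)}) := by
  obtain ⟨hsub, hpair⟩ := hM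
  have hvp : G.Adj v p := hsub hmem
  have hup : G.Adj u p := by
    rcases (twin_mem_iff G u v htwin p).mpr (Or.inr hvp) with h | h
    · exact absurd h hp
    · exact h
  -- key claim
  have claim : ∀ f ∈ M, f ≠ s(v, p) → ∀ a ∈ s(u, p), ∀ b ∈ f, a ≠ b ∧ ¬ G.Adj a b := by
    intro f hf hfne a ha b hb
    have hne' : s(v, p) ≠ f := fun h => hfne h.symm
    rw [Sym2.mem_iff] at ha
    rcases ha with h | h
    · rw [h]
      have hv := hpair _ hmem _ hf hne' v (by simp) b hb
      constructor
      · intro h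
        rcases (twin_mem_iff G u v htwin b).mp (Or.inl h.symm) with h' | h'
        · exact hv.1 h'.symm
        · exact hv.2 h'
      · intro h
        rcases (twin_mem_iff G u v htwin b).mp (Or.inr h) with h' | h'
        · exact hv.1 h'.symm
        · exact hv.2 h'
    · rw [h]
      exact hpair _ hmem _ hf hne' p (by simp) b hb
  constructor
  · intro e he
    rcases he with ⟨heM, _⟩ | he
    · exact hsub heM
    · simp only [Set.mem_singleton_iff] at he
      subst he
      exact hup
  · intro e he f hf hef a ha b hb
    rcases he with ⟨heM, hevp⟩ | he <;> rcases hf with ⟨hfM, hfvp⟩ | hf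
    · exact hpair _ heM _ hfM hef a ha b hb
    · simp only [Set.mem_singleton_iff] at hf
      subst hf
      simp only [Set.mem_singleton_iff] at hevp
      have := claim _ heM hevp b hb a ha
      exact ⟨this.1.symm, fun h => this.2 h.symm⟩
    · simp only [Set.mem_singleton_iff] at he
      subst he
      simp only [Set.mem_singleton_iff] at hfvp
      exact claim _ hfM hfvp a ha b hb
    · simp only [Set.mem_singleton_iff] at he hf
      exact absurd (he.trans hf.symm) hef

theorem swap_twin_edge_maximal {V : Type*} (G : SimpleGraph V) (u v : V)
    (huv : G.Adj u v)
    (htwin : insert u (G.neighborSet u) = insert v (G.neighborSet v))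
    (M : Set (Sym2 V)) (hM : IsMaximalInducedMatching G M)
    (p : V) (hp : p ≠ u) (hmem : s(v, p) ∈ M) :
    IsMaximalInducedMatching G ((M \ {s(v, p)}) ∪ {s(u, p)}) := by
  obtain ⟨hind, hmax⟩ := hM
  have hvp : G.Adj v p := hind.1 hmem
  have hpv : p ≠ v := fun h => G.irrefl (h ▸ hvp)
  have hne : s(u, p) ≠ s(v, p) := by
    intro heq
    rw [Sym2.eq_iff] at heq
    rcases heq with ⟨h1, -⟩ | ⟨h1, -⟩
    · exact G.ne_of_adj huv h1
    · exact hp h1.symm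
  have hupM : s(u, p) ∉ M := by
    intro h
    have := hind.2 _ h _ hmem hne u (by simp) v (by simp)
    exact this.2 huv
  refine ⟨swap_ind G u v huv htwin M hind p hp hmem, ?_⟩
  intro M'' hM'' hsub''
  have hupM'' : s(u, p) ∈ M'' := hsub'' (Or.inr rfl)
  have hvpM'' : s(v, p) ∉ M'' := by
    intro h
    have := hM''.2 _ h _ hupM'' hne.symm v (by simp) u (by simp)
    exact this.2 huv.symm
  have hN : IsInducedMatching G ((M'' \ {s(u, p)}) ∪ {s(v, p)}) :=
    swap_ind G v u huv.symm htwin.symm M'' hM'' p hpv hupM''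
  have hMN : M ⊆ (M'' \ {s(u, p)}) ∪ {s(v, p)} := by
    intro e heM
    by_cases h : e = s(v, p)
    · exact Or.inr h
    · refine Or.inl ⟨hsub'' (Or.inl ⟨heM, h⟩), ?_⟩
      intro h'
      simp only [Set.mem_singleton_iff] at h'
      exact hupM (h' ▸ heM)
  have hNM := hmax _ hN hMN
  ext e
  constructor
  · intro he
    by_cases h : e = s(u, p)
    · exact Or.inr h
    · have : e ∈ (M'' \ {s(u, p)}) ∪ {s(v, p)} := Or.inl ⟨he, h⟩
      rw [hNM] at this
      refine Or.inl ⟨this, ?_⟩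
      intro h'
      simp only [Set.mem_singleton_iff] at h'
      exact hvpM'' (h' ▸ he)
  · exact fun he => hsub'' he
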